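/- Let (W,S) be an irreducible infinite right-angled Coxeter system. For any v, w ∈ W there exists u ∈ W such that |v u w| = |v| + |u| + |w|. -/

import Mathlib

open List CoxeterSystem

namespace RAJoin

variable {B W : Type*} [Group W] {M : CoxeterMatrix B} (cs : CoxeterSystem M W)

local prefix:100 "s" => cs.simple
local prefix:100 "π" => cs.wordProd
local prefix:100 "ℓ" => cs.length
local prefix:100 "ris" => cs.rightInvSeq

theorem risAppend (ω₁ ω₂ : List B) :
    ris (ω₁ ++ ω₂) = (ris ω₁).map (fun t => (π ω₂)⁻¹ * t * π ω₂) ++ ris ω₂ := by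
  induction ω₁ with
  | nil => simp [rightInvSeq]
  | cons i ω ih =>
    simp only [cons_append, rightInvSeq, ih, map_cons, cons_append]
    congr 1
    have : π (ω ++ ω₂) = π ω * π ω₂ := cs.wordProd_append ω ω₂
    rw [this]
    group

section Eta

open Classical in
/-- The Björner–Brenti style permutation used to detect inversions. -/
noncomputable def etaPerm (i : B) : Equiv.Perm (W × Bool) :=
  Function.Involutive.toPerm
    (fun p => (s i * p.1 * s i, if p.1 = s i then !p.2 else p.2)) (by
      intro p
      have h1 : s i * (s i * p.1 * s i) * s i = p.1 := by
        have := cs.simple_mul_simple_self i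
        calc s i * (s i * p.1 * s i) * s i = (s i * s i) * p.1 * (s i * s i) := by group
        _ = p.1 := by rw [this]; group
      have h2 : (s i * p.1 * s i = s i) ↔ (p.1 = s i) := by
        constructor
        · intro h
          have : s i * (s i * p.1 * s i) * s i = s i * s i * s i := by rw [h]
          rwa [h1, cs.simple_mul_simple_self, one_mul] at this
        · intro h; rw [h, cs.simple_mul_simple_self, one_mul]
      ext
      · exact h1
      · simp only [h2]
        by_cases hp : p.1 = s i <;> simp [hp])

open Classical in
theorem etaPerm_apply (i : B) (t : W) (b : Bool) :
    etaPerm cs i (t, b) = (s i * t * s i, if t = s i then !b else b) := rfl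

open Classical in
theorem etaPerm_comm {i j : B} (h : s i * s j = s j * s i) :
    etaPerm cs i * etaPerm cs j = etaPerm cs j * etaPerm cs i := by
  have hji : s j * s i * s j = s i := by
    rw [← h]; rw [mul_assoc, cs.simple_mul_simple_self, mul_one]
  have hij : s i * s j * s i = s j := by
    rw [h]; rw [mul_assoc, cs.simple_mul_simple_self, mul_one]
  apply Equiv.ext
  rintro ⟨t, b⟩
  · simp only [Equiv.Perm.mul_apply, etaPerm_apply]
    have e1 : s j * t * s j = s i ↔ t = s i := by
      constructor
      · intro hh
        have : s j * (s j * t * s j) * s j = s j * s i * s j := by rw [hh]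
        rwa [hji, show s j * (s j * t * s j) * s j = (s j * s j) * t * (s j * s j) by group,
          cs.simple_mul_simple_self, one_mul, mul_one] at this
      · intro hh; rw [hh, hji]
    have e2 : s i * t * s i = s j ↔ t = s j := by
      constructor
      · intro hh
        have : s i * (s i * t * s i) * s i = s i * s j * s i := by rw [hh]
        rwa [hij, show s i * (s i * t * s i) * s i = (s i * s i) * t * (s i * s i) by group,
          cs.simple_mul_simple_self, one_mul, mul_one] at this
      · intro hh; rw [hh, hij]
    have helem : s i * (s j * t * s j) * s i = s j * (s i * t * s i) * s j := by
      calc s i * (s j * t * s j) * s i = (s i * s j) * t * (s j * s i) := by group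
      _ = (s j * s i) * t * (s i * s j) := by rw [h, ← h]
      _ = s j * (s i * t * s i) * s j := by group
    refine Prod.ext helem ?_
    simp only [e1, e2]
    by_cases h1 : t = s i <;> by_cases h2 : t = s j
    · have hs : s i = s j := h1.symm.trans h2
      simp [h1, h2, hs]
    · have hne : s i ≠ s j := fun hh => h2 (h1.trans hh)
      simp [h1, h2, hne]
    · have hne : s j ≠ s i := fun hh => h1 (h2.trans hh)
      simp [h1, h2, hne]
    · simp [h1, h2]

theorem etaPerm_invol (i : B) : etaPerm cs i * etaPerm cs i = 1 := by
  apply Equiv.ext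
  intro p
  simp only [Equiv.Perm.mul_apply, Equiv.Perm.one_apply]
  exact (Function.Involutive.toPerm _ _).symm_apply_apply p |>.symm ▸ rfl

theorem etaLiftable (hra : ∀ i j : B, i ≠ j → M i j = 2 ∨ M i j = 0) :
    M.IsLiftable (fun i => etaPerm cs i) := by
  intro i j
  rcases eq_or_ne i j with rfl | hne
  · rw [M.diagonal, pow_one]
    exact etaPerm_invol cs i
  · rcases hra i j hne with h2 | h0
    · rw [h2]
      have hcomm : s i * s j = s j * s i := by
        have h := cs.simple_mul_simple_pow i j
        rw [h2] at h
        have h' : (s i * s j) * (s i * s j) = 1 := by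
          have : (s i * s j) ^ 2 = (s i * s j) * (s i * s j) := sq (s i * s j)
          rw [← this, h]
        calc s i * s j = (s i * s j)⁻¹ := by
              rw [eq_comm, inv_eq_iff_mul_eq_one, h']
        _ = (s j)⁻¹ * (s i)⁻¹ := by rw [mul_inv_rev]
        _ = s j * s i := by rw [cs.inv_simple, cs.inv_simple]
      have hpc := etaPerm_comm cs hcomm
      calc (etaPerm cs i * etaPerm cs j) ^ 2
          = etaPerm cs i * (etaPerm cs j * etaPerm cs i) * etaPerm cs j := by
            rw [sq]; group
      _ = etaPerm cs i * (etaPerm cs i * etaPerm cs j) * etaPerm cs j := by rw [hpc]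
      _ = (etaPerm cs i * etaPerm cs i) * (etaPerm cs j * etaPerm cs j) := by group
      _ = 1 := by rw [etaPerm_invol, etaPerm_invol, one_mul]
    · rw [h0, pow_zero]

variable (hra : ∀ i j : B, i ≠ j → M i j = 2 ∨ M i j = 0)

/-- The sign homomorphism detecting right inversions. -/
noncomputable def eta : W →* Equiv.Perm (W × Bool) :=
  cs.lift ⟨fun i => etaPerm cs i, etaLiftable cs hra⟩

theorem eta_simple (i : B) : eta cs hra (s i) = etaPerm cs i :=
  cs.lift_apply_simple (etaLiftable cs hra) i

open Classical in
theorem eta_wordProd (ω : List B) (t : W) (b : Bool) :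
    eta cs hra (π ω) (t, b) =
      (π ω * t * (π ω)⁻¹, Bool.xor (Nat.bodd ((ris ω).count t)) b) := by
  induction ω using List.reverseRecOn generalizing t b with
  | nil => simp [rightInvSeq]
  | append_singleton ω i ih =>
    have h1 : π (ω ++ [i]) = π ω * s i := by
      rw [cs.wordProd_append, cs.wordProd_singleton]
    rw [h1, map_mul, Equiv.Perm.mul_apply, eta_simple, etaPerm_apply, ih]
    have hconj : ∀ t' : W, (MulAut.conj (s i)).symm t' = s i * t' * s i := by
      intro t'
      simp [MulAut.conj_symm_apply, cs.inv_simple]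
    have hcount : ((ris (ω ++ [i])).count t)
        = ((ris ω).count (s i * t * s i)) + (if t = s i then 1 else 0) := by
      rw [← List.concat_eq_append, cs.rightInvSeq_concat, List.concat_eq_append,
        List.count_append]
      congr 1
      · have : t = (MulAut.conj (s i)) (s i * t * s i) := by
          simp [MulAut.conj_apply, cs.inv_simple]
          calc t = (s i * s i) * t * (s i * s i) := by rw [cs.simple_mul_simple_self]; group
          _ = s i * (s i * t * s i) * s i := by group
        conv_lhs => rw [this]
        exact List.count_map_of_injective _ _ (MulAut.conj (s i)).injective _
      · simp only [List.count_singleton]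
        by_cases h : t = s i
        · simp [h]
        · rw [if_neg h]
          simp only [beq_iff_eq]
          rw [if_neg (fun hh : s i = t => h hh.symm)]
    refine Prod.ext ?_ ?_
    · show π ω * (s i * t * s i) * (π ω)⁻¹ = (π ω * s i) * t * (π ω * s i)⁻¹
      rw [mul_inv_rev, cs.inv_simple]
      group
    · show Bool.xor (Nat.bodd ((ris ω).count (s i * t * s i)))
          (if t = s i then !b else b) = Bool.xor (Nat.bodd ((ris (ω ++ [i])).count t)) b
      rw [hcount]
      by_cases h : t = s i <;>
        simp [h, Nat.bodd_add] <;>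
        cases Nat.bodd ((ris ω).count (s i * t * s i)) <;> cases b <;> rfl

include hra in
open Classical in
theorem count_ris_bodd_eq {ω ω' : List B} (hπ : π ω = π ω') (t : W) :
    Nat.bodd ((ris ω).count t) = Nat.bodd ((ris ω').count t) := by
  classical
  have h1 := eta_wordProd cs hra ω t false
  have h2 := eta_wordProd cs hra ω' t false
  rw [hπ] at h1
  rw [h1] at h2
  have := congrArg Prod.snd h2
  simpa using this

include hra in
open Classical in
theorem mem_rightInvSeq_iff {ω : List B} (hred : cs.IsReduced ω) (c : B) :
    s c ∈ ris ω ↔ cs.IsRightDescent (π ω) c := by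
  classical
  constructor
  · intro hmem
    exact (cs.isRightInversion_of_mem_rightInvSeq hred hmem).2
  · intro hdesc
    have h1 : ℓ ((π ω) * s c) + 1 = ℓ (π ω) := cs.isRightDescent_iff.mp hdesc
    obtain ⟨σ, hσred, hσ⟩ := cs.exists_reduced_word' ((π ω) * s c)
    have hw : π (σ ++ [c]) = π ω := by
      rw [cs.wordProd_append, cs.wordProd_singleton, ← hσ,
        cs.simple_mul_simple_cancel_right]
    have hred2 : cs.IsReduced (σ ++ [c]) := by
      show ℓ (π (σ ++ [c])) = _
      rw [hw, List.length_append, List.length_singleton, ← hσred, ← hσ, ← h1]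
    have hmem2 : s c ∈ ris (σ ++ [c]) := by
      rw [risAppend]
      apply List.mem_append_right
      simp [rightInvSeq]
    have hcount2 : (ris (σ ++ [c])).count (s c) = 1 :=
      List.count_eq_one_of_mem hred2.nodup_rightInvSeq hmem2
    have hbodd := count_ris_bodd_eq cs hra hw (s c)
    rw [hcount2] at hbodd
    have : (ris ω).count (s c) ≠ 0 := by
      intro h0
      rw [h0] at hbodd
      simp at hbodd
    exact List.count_pos_iff.mp (Nat.pos_of_ne_zero this)

theorem erase_of_mem_ris {ω : List B} {t : W} (h : t ∈ ris ω) :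
    ∃ j, j < ω.length ∧ π ω * t = π (ω.eraseIdx j) := by
  obtain ⟨j, hj, hget⟩ := List.getElem_of_mem h
  refine ⟨j, by simpa using hj, ?_⟩
  have hgd : (ris ω).getD j 1 = t := by
    rw [List.getD_eq_getElem (ris ω) 1 hj, hget]
  rw [← hgd]
  exact cs.wordProd_mul_getD_rightInvSeq ω j

end Eta

theorem eraseIdx_append_left {α : Type*} : ∀ (l l' : List α) (j : ℕ), j < l.length →
    (l ++ l').eraseIdx j = l.eraseIdx j ++ l'
  | [], _, j, h => by simp at h
  | a :: l, l', 0, _ => by simp [List.eraseIdx]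
  | a :: l, l', (j+1), h => by
    rw [List.cons_append, List.eraseIdx_cons_succ, List.eraseIdx_cons_succ,
      eraseIdx_append_left l l' j (by simpa using h), List.cons_append]

theorem eraseIdx_append_right {α : Type*} : ∀ (l l' : List α) (j : ℕ), l.length ≤ j →
    (l ++ l').eraseIdx j = l ++ l'.eraseIdx (j - l.length)
  | [], l', j, _ => by simp
  | a :: l, l', 0, h => by simp at h
  | a :: l, l', (j+1), h => by
    rw [List.cons_append, List.eraseIdx_cons_succ,
      eraseIdx_append_right l l' j (by simpa using h)]
    simp

section Pair

variable (a b : B)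

/-- Reflection of `ℤ` about `0`. -/
def r0 : Equiv.Perm ℤ := Equiv.neg ℤ

/-- Reflection of `ℤ` about `1`. -/
def r1 : Equiv.Perm ℤ := (Equiv.neg ℤ).trans (Equiv.addLeft 2)

theorem r0_apply (x : ℤ) : r0 x = -x := rfl
theorem r1_apply (x : ℤ) : r1 x = 2 + -x := rfl

open Classical in
/-- The function defining the retraction onto the infinite dihedral group. -/
noncomputable def pairF : B → Equiv.Perm ℤ := fun i => if i = a then r0 else if i = b then r1 else 1

theorem r0_invol : r0 * r0 = 1 := by
  apply Equiv.ext; intro x; simp [r0, Equiv.Perm.mul_apply]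

theorem r1_invol : r1 * r1 = 1 := by
  apply Equiv.ext; intro x
  simp [r1, Equiv.Perm.mul_apply]

open Classical in
theorem pairF_invol (i : B) : pairF a b i * pairF a b i = 1 := by
  unfold pairF
  split_ifs
  · exact r0_invol
  · exact r1_invol
  · simp

theorem pairLiftable (hra : ∀ i j : B, i ≠ j → M i j = 2 ∨ M i j = 0)
    (hab : a ≠ b) (hM : M a b = 0) : M.IsLiftable (pairF a b) := by
  classical
  intro i j
  rcases eq_or_ne i j with rfl | hne
  · rw [M.diagonal, pow_one]
    exact pairF_invol a b i
  · rcases hra i j hne with h2 | h0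
    · rw [h2]
      have hone : pairF a b i = 1 ∨ pairF a b j = 1 := by
        by_cases hia : i = a
        · have hjb : j ≠ b := by
            intro hjb
            rw [hia, hjb, hM] at h2
            norm_num at h2
          have hja : j ≠ a := fun hja => hne (hia.trans hja.symm)
          right
          unfold pairF
          rw [if_neg hja, if_neg hjb]
        · by_cases hib : i = b
          · have hja : j ≠ a := by
              intro hja
              rw [hib, hja, M.symmetric, hM] at h2
              norm_num at h2
            have hjb : j ≠ b := fun hjb => hne (hib.trans hjb.symm)
            right
            unfold pairF
            rw [if_neg hja, if_neg hjb]
          · left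
            unfold pairF
            rw [if_neg hia, if_neg hib]
      rcases hone with h | h
      · rw [h, one_mul, sq]
        exact pairF_invol a b j
      · rw [h, mul_one, sq]
        exact pairF_invol a b i
    · rw [h0, pow_zero]

variable (hra : ∀ i j : B, i ≠ j → M i j = 2 ∨ M i j = 0) (hab : a ≠ b) (hM : M a b = 0)

/-- The retraction onto the infinite dihedral group generated by `a`, `b`. -/
noncomputable def pairPhi : W →* Equiv.Perm ℤ :=
  cs.lift ⟨pairF a b, pairLiftable a b hra hab hM⟩

theorem pairPhi_simple (i : B) : pairPhi cs a b hra hab hM (s i) = pairF a b i :=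
  cs.lift_apply_simple _ i

include hra hab hM in
theorem pairPhi_affine (y : W) : ∃ (ε : Bool) (t : ℤ),
    (∀ x : ℤ, pairPhi cs a b hra hab hM y x = if ε then x + t else t - x) ∧
    (if ε then 2 * t.natAbs else t.natAbs + (t - 2).natAbs) ≤ 2 * ℓ y := by
  classical
  suffices H : ∀ (n : ℕ) (y : W), ℓ y = n → ∃ (ε : Bool) (t : ℤ),
      (∀ x : ℤ, pairPhi cs a b hra hab hM y x = if ε then x + t else t - x) ∧
      (if ε then 2 * t.natAbs else t.natAbs + (t - 2).natAbs) ≤ 2 * ℓ y from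
    H (ℓ y) y rfl
  intro n
  induction n using Nat.strong_induction_on with
  | _ n ih =>
    intro y hy
    rcases eq_or_ne y 1 with rfl | hne
    · exact ⟨true, 0, by simp, by simp⟩
    · obtain ⟨i, hi⟩ := cs.exists_rightDescent_of_ne_one hne
      have hy' : ℓ (y * s i) + 1 = ℓ y := cs.isRightDescent_iff.mp hi
      obtain ⟨ε, t, hform, hbound⟩ := ih (ℓ (y * s i)) (by omega) (y * s i) rfl
      have hyy : y = (y * s i) * s i := by
        rw [cs.simple_mul_simple_cancel_right]
      have happ : ∀ x : ℤ, pairPhi cs a b hra hab hM y x =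
          pairPhi cs a b hra hab hM (y * s i) (pairF a b i x) := by
        intro x
        conv_lhs => rw [hyy]
        rw [map_mul, Equiv.Perm.mul_apply, pairPhi_simple]
      by_cases hia : i = a
      · refine ⟨!ε, t, ?_, ?_⟩
        · intro x
          rw [happ]
          have hv : pairF a b i x = -x := by unfold pairF; rw [if_pos hia]; rfl
          rw [hv, hform]
          cases ε <;> simp <;> ring
        · cases ε <;> simp at hbound ⊢ <;> omega
      · by_cases hib : i = b
        · refine ⟨!ε, if ε then t + 2 else t - 2, ?_, ?_⟩
          · intro x
            rw [happ]
            have hv : pairF a b i x = 2 + -x := by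
              unfold pairF; rw [if_neg hia, if_pos hib]; rfl
            rw [hv, hform]
            cases ε <;> simp <;> ring
          · cases ε <;> simp at hbound ⊢ <;> omega
        · refine ⟨ε, t, ?_, ?_⟩
          · intro x
            rw [happ]
            have hv : pairF a b i x = x := by unfold pairF; rw [if_neg hia, if_neg hib]; rfl
            rw [hv, hform]
          · cases ε <;> simp at hbound ⊢ <;> omega

end Pair

section Alt

variable (a b : B)

/-- Letters of the alternating word `b, a, b, a, ...`. -/
def altFun : ℕ → B := fun k => if k % 2 = 0 then b else a

/-- The alternating word `b, a, b, a, ...` of length `k+1`. -/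
def delta (k : ℕ) : List B := (List.range (k+1)).map (altFun a b)

theorem delta_succ (k : ℕ) : delta a b (k+1) = delta a b k ++ [altFun a b (k+1)] := by
  unfold delta
  rw [List.range_succ, List.map_append, List.map_singleton]

theorem length_delta (k : ℕ) : (delta a b k).length = k + 1 := by
  simp [delta]

variable (hra : ∀ i j : B, i ≠ j → M i j = 2 ∨ M i j = 0) (hab : a ≠ b) (hM : M a b = 0)

theorem phi_delta (k : ℕ) (x : ℤ) :
    pairPhi cs a b hra hab hM (π (delta a b k)) x =
      if (k+1) % 2 = 0 then x + ((k:ℤ)+1) else ((k:ℤ)+2) - x := by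
  induction k generalizing x with
  | zero =>
    have h0 : delta a b 0 = [b] := by
      unfold delta altFun
      simp [List.range_succ]
    rw [h0, cs.wordProd_singleton, pairPhi_simple]
    have hv : pairF a b b = r1 := by
      unfold pairF
      rw [if_neg (fun h => hab h.symm), if_pos rfl]
    rw [hv, r1_apply]
    norm_num
    ring
  | succ k ih =>
    rw [delta_succ, cs.wordProd_append, cs.wordProd_singleton, map_mul,
      Equiv.Perm.mul_apply, pairPhi_simple]
    by_cases hk : k % 2 = 0
    · -- k even, so k+1 odd, letter is a
      have hc : altFun a b (k+1) = a := by
        unfold altFun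
        rw [if_neg (by omega)]
      have hv : pairF a b (altFun a b (k+1)) x = -x := by
        rw [hc]; unfold pairF; rw [if_pos rfl]; rfl
      rw [hv, ih]
      rw [if_neg (by omega), if_pos (by omega)]
      push_cast
      ring
    · -- k odd, k+1 even, letter is b
      have hc : altFun a b (k+1) = b := by
        unfold altFun
        rw [if_pos (by omega)]
      have hv : pairF a b (altFun a b (k+1)) x = 2 + -x := by
        rw [hc]; unfold pairF
        rw [if_neg (fun h => hab h.symm), if_pos rfl]; rfl
      rw [hv, ih]
      rw [if_pos (by omega), if_neg (by omega)]
      push_cast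
      ring

include hra hab hM in
theorem length_delta_ge (k : ℕ) : k + 1 ≤ ℓ (π (delta a b k)) := by
  obtain ⟨ε, t, hform, hbound⟩ := pairPhi_affine cs a b hra hab hM (π (delta a b k))
  have e0 := (hform 0).symm.trans (phi_delta cs a b hra hab hM k 0)
  have e1 := (hform 1).symm.trans (phi_delta cs a b hra hab hM k 1)
  by_cases hk : (k+1) % 2 = 0
  · rw [if_pos hk] at e0 e1
    cases ε <;> simp at e0 e1 hbound <;> omega
  · rw [if_neg hk] at e0 e1
    cases ε <;> simp at e0 e1 hbound <;> omega

end Alt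

theorem not_both_descents (hra : ∀ i j : B, i ≠ j → M i j = 2 ∨ M i j = 0)
    {a b : B} (hab : a ≠ b) (hM : M a b = 0) (y : W)
    (ha : cs.IsRightDescent y a) (hb : cs.IsRightDescent y b) : False := by
  classical
  set Q : ℕ → Prop :=
    fun k => ∃ ζ : List B, cs.IsReduced (ζ ++ delta a b k) ∧ y = π (ζ ++ delta a b k) with hQ
  have hQ0 : Q 0 := by
    have h1 : ℓ (y * s b) + 1 = ℓ y := cs.isRightDescent_iff.mp hb
    obtain ⟨σ, hσred, hσ⟩ := cs.exists_reduced_word' (y * s b)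
    have hd0 : delta a b 0 = [b] := by
      unfold delta altFun
      simp [List.range_succ]
    refine ⟨σ, ?_, ?_⟩
    · show ℓ (π (σ ++ delta a b 0)) = _
      rw [hd0, cs.wordProd_append, cs.wordProd_singleton, ← hσ,
        cs.simple_mul_simple_cancel_right, List.length_append, List.length_singleton,
        ← hσred, ← hσ, ← h1]
    · rw [hd0, cs.wordProd_append, cs.wordProd_singleton, ← hσ,
        cs.simple_mul_simple_cancel_right]
  have hstep : ∀ k, Q k → Q (k+1) := by
    intro k hk
    obtain ⟨ζ, hred, hy⟩ := hk
    set c' := altFun a b (k+1) with hc'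
    have hdesc : cs.IsRightDescent y c' := by
      unfold altFun at hc'
      by_cases hpar : (k+1) % 2 = 0
      · rw [hc', if_pos hpar]; exact hb
      · rw [hc', if_neg hpar]; exact ha
    have hmem : s c' ∈ ris (ζ ++ delta a b k) :=
      (mem_rightInvSeq_iff cs hra hred c').mpr (hy ▸ hdesc)
    obtain ⟨j, hj, herase⟩ := erase_of_mem_ris cs hmem
    have hlenρ : (ζ ++ delta a b k).length = ζ.length + (k+1) := by
      rw [List.length_append, length_delta]
    have hlY : ℓ y = ζ.length + (k+1) := by
      rw [hy, hred, hlenρ]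
    by_cases hjζ : j < ζ.length
    · refine ⟨ζ.eraseIdx j, ?_, ?_⟩
      · show ℓ (π (ζ.eraseIdx j ++ delta a b (k+1))) = _
        have hw : π (ζ.eraseIdx j ++ delta a b (k+1)) = y := by
          rw [delta_succ, ← List.append_assoc, cs.wordProd_append, cs.wordProd_singleton,
            ← eraseIdx_append_left ζ (delta a b k) j hjζ, ← herase, ← hy,
            cs.simple_mul_simple_cancel_right]
        rw [hw, List.length_append, length_delta]
        have hlen2 : (ζ.eraseIdx j).length = ζ.length - 1 := by
          rw [List.eraseIdx_eq_take_drop_succ, List.length_append, List.length_take,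
            List.length_drop]
          omega
        have hle : ℓ (y * s c') + 1 = ℓ y := cs.isRightDescent_iff.mp hdesc
        omega
      · rw [delta_succ, ← List.append_assoc, cs.wordProd_append, cs.wordProd_singleton,
          ← eraseIdx_append_left ζ (delta a b k) j hjζ, ← herase, ← hy,
          cs.simple_mul_simple_cancel_right]
    · exfalso
      have hjge : ζ.length ≤ j := by omega
      have hjlt : j - ζ.length < k + 1 := by
        rw [hlenρ] at hj
        omega
      have hcancel : π (delta a b k) * s c' = π ((delta a b k).eraseIdx (j - ζ.length)) := by
        apply mul_left_cancel (a := π ζ)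
        rw [← mul_assoc, ← cs.wordProd_append, herase,
          eraseIdx_append_right ζ (delta a b k) j hjge, cs.wordProd_append]
      have hbig : π (delta a b (k+1)) = π ((delta a b k).eraseIdx (j - ζ.length)) := by
        rw [delta_succ, cs.wordProd_append, cs.wordProd_singleton, hcancel]
      have h1 : k + 2 ≤ ℓ (π (delta a b (k+1))) := length_delta_ge cs a b hra hab hM (k+1)
      have h2 : ℓ (π ((delta a b k).eraseIdx (j - ζ.length))) ≤ k := by
        have hle := cs.length_wordProd_le ((delta a b k).eraseIdx (j - ζ.length))
        have : ((delta a b k).eraseIdx (j - ζ.length)).length ≤ k := by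
          rw [List.eraseIdx_eq_take_drop_succ, List.length_append, List.length_take,
            List.length_drop, length_delta]
          omega
        omega
      rw [hbig] at h1
      omega
  have hall : ∀ k, Q k := by
    intro k
    induction k with
    | zero => exact hQ0
    | succ n ihn => exact hstep n ihn
  obtain ⟨ζ, hred, hy⟩ := hall (ℓ y)
  have hlen := hred
  unfold CoxeterSystem.IsReduced at hlen
  rw [← hy] at hlen
  rw [List.length_append, length_delta] at hlen
  omega

theorem simple_comm {i j : B} (h2 : M i j = 2) : s i * s j = s j * s i := by
  have h := cs.simple_mul_simple_pow i j
  rw [h2] at h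
  have h' : (s i * s j) * (s i * s j) = 1 := by
    rw [← sq, h]
  calc s i * s j = (s i * s j)⁻¹ := by rw [eq_comm, inv_eq_iff_mul_eq_one, h']
  _ = (s j)⁻¹ * (s i)⁻¹ := by rw [mul_inv_rev]
  _ = s j * s i := by rw [cs.inv_simple, cs.inv_simple]

theorem simple_ne (hra : ∀ i j : B, i ≠ j → M i j = 2 ∨ M i j = 0)
    {e f : B} (hef : e ≠ f) : s e ≠ s f := by
  classical
  have hlift : M.IsLiftable (fun i => if i = e then (-1 : ℤˣ) else 1) := by
    intro i j
    rcases eq_or_ne i j with rfl | hne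
    · rw [M.diagonal, pow_one]
      by_cases hie : i = e <;> simp [hie]
    · rcases hra i j hne with h2 | h0
      · rw [h2]
        by_cases hie : i = e <;> by_cases hje : j = e <;> simp [hie, hje]
      · rw [h0, pow_zero]
  intro hcontra
  have h1 := cs.lift_apply_simple hlift e
  have h2 := cs.lift_apply_simple hlift f
  rw [← hcontra] at h2
  rw [h1] at h2
  rw [if_pos rfl, if_neg (fun h => hef h.symm)] at h2
  exact absurd h2 (by decide)

theorem descent_transfer (hra : ∀ i j : B, i ≠ j → M i j = 2 ∨ M i j = 0)
    {e f : B} (hef2 : M e f = 2) (hef : e ≠ f) {z : W}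
    (hnd : ¬cs.IsRightDescent z f) :
    cs.IsRightDescent (z * s f) e ↔ cs.IsRightDescent z e := by
  classical
  have hcomm := simple_comm cs hef2
  obtain ⟨ρ, hρred, hρ⟩ := cs.exists_reduced_word' z
  have hlen : ℓ (z * s f) = ℓ z + 1 := cs.not_isRightDescent_iff.mp hnd
  have hπ : π (ρ ++ [f]) = z * s f := by
    rw [cs.wordProd_append, cs.wordProd_singleton, ← hρ]
  have hred' : cs.IsReduced (ρ ++ [f]) := by
    show ℓ (π (ρ ++ [f])) = _
    rw [hπ, hlen, List.length_append, List.length_singleton, ← hρred, hρ]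
  have h1 : cs.IsRightDescent (z * s f) e ↔ s e ∈ ris (ρ ++ [f]) := by
    rw [← hπ]
    exact (mem_rightInvSeq_iff cs hra hred' e).symm
  have h2 : cs.IsRightDescent z e ↔ s e ∈ ris ρ := by
    rw [hρ]
    exact (mem_rightInvSeq_iff cs hra hρred e).symm
  rw [h1, h2, risAppend]
  constructor
  · intro hmem
    rcases List.mem_append.mp hmem with hm | hm
    · obtain ⟨t, htmem, hteq⟩ := List.mem_map.mp hm
      have : t = s e := by
        have h3 : (π [f])⁻¹ * t * π [f] = s e := hteq
        rw [cs.wordProd_singleton, cs.inv_simple] at h3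
        calc t = s f * (s f * t * s f) * s f := by
              rw [show s f * (s f * t * s f) * s f = (s f * s f) * t * (s f * s f) by group,
                cs.simple_mul_simple_self]
              group
        _ = s f * s e * s f := by rw [h3]
        _ = s e * s f * s f := by rw [← hcomm]
        _ = s e := by rw [mul_assoc, cs.simple_mul_simple_self, mul_one]
      rwa [this] at htmem
    · exfalso
      have : s e = s f := by simpa [rightInvSeq] using hm
      exact simple_ne cs hra hef this
  · intro hmem
    apply List.mem_append_left
    apply List.mem_map.mpr
    refine ⟨s e, hmem, ?_⟩
    rw [cs.wordProd_singleton, cs.inv_simple]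
    calc s f * s e * s f = s e * s f * s f := by rw [← hcomm]
    _ = s e := by rw [mul_assoc, cs.simple_mul_simple_self, mul_one]

theorem extend_tail (hra : ∀ i j : B, i ≠ j → M i j = 2 ∨ M i j = 0)
    {p q : B} (hpq : p ≠ q) (hM0 : M p q = 0) (x : W) :
    ∃ t : W, ℓ (x * t) = ℓ x + ℓ t ∧ cs.IsRightDescent (x * t) q ∧
      (∀ e, M e p = 2 → M e q = 2 → e ≠ p → e ≠ q →
        (cs.IsRightDescent (x * t) e ↔ cs.IsRightDescent x e)) := by
  by_cases hq : cs.IsRightDescent x q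
  · have hp : ¬cs.IsRightDescent x p := fun hp => not_both_descents cs hra hpq hM0 x hp hq
    have hx1 : ℓ (x * s p) = ℓ x + 1 := cs.not_isRightDescent_iff.mp hp
    have hd1 : cs.IsRightDescent (x * s p) p := by
      show ℓ (x * s p * s p) < ℓ (x * s p)
      rw [cs.simple_mul_simple_cancel_right, hx1]
      omega
    have hq1 : ¬cs.IsRightDescent (x * s p) q :=
      fun h => not_both_descents cs hra hpq hM0 (x * s p) hd1 h
    have hx2 : ℓ (x * s p * s q) = ℓ x + 2 := by
      rw [cs.not_isRightDescent_iff.mp hq1, hx1]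
    refine ⟨s p * s q, ?_, ?_, ?_⟩
    · have h1 : ℓ (x * (s p * s q)) = ℓ x + 2 := by rw [← mul_assoc]; exact hx2
      have h2 : ℓ (s p * s q) ≤ 2 := by
        have := cs.length_mul_le (s p) (s q)
        simpa using this
      have h3 := cs.length_mul_le x (s p * s q)
      omega
    · show ℓ (x * (s p * s q) * s q) < ℓ (x * (s p * s q))
      rw [← mul_assoc, mul_assoc (x * s p), cs.simple_mul_simple_self, mul_one, hx1, hx2]
      omega
    · intro e hep heq hnep hneq
      have t1 : cs.IsRightDescent (x * s p * s q) e ↔ cs.IsRightDescent (x * s p) e :=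
        descent_transfer cs hra heq hneq hq1
      have t2 : cs.IsRightDescent (x * s p) e ↔ cs.IsRightDescent x e :=
        descent_transfer cs hra hep hnep hp
      rw [← mul_assoc, t1, t2]
  · have hx1 : ℓ (x * s q) = ℓ x + 1 := cs.not_isRightDescent_iff.mp hq
    refine ⟨s q, ?_, ?_, ?_⟩
    · rw [hx1, cs.length_simple]
    · show ℓ (x * s q * s q) < ℓ (x * s q)
      rw [cs.simple_mul_simple_cancel_right, hx1]
      omega
    · intro e hep heq hnep hneq
      exact descent_transfer cs hra heq hneq hq

include cs in
theorem exists_neighbor [Infinite W] (hra : ∀ i j : B, i ≠ j → M i j = 2 ∨ M i j = 0)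
    (irr : ∀ T : Set B, (∀ i ∈ T, ∀ j ∉ T, M i j = 2) → T = ∅ ∨ T = Set.univ)
    (i : B) : ∃ j, j ≠ i ∧ M i j = 0 := by
  classical
  by_contra hcon
  push_neg at hcon
  have h2 : ∀ j, j ≠ i → M i j = 2 := by
    intro j hj
    rcases hra i j (fun h => hj h.symm) with h | h
    · exact h
    · exact absurd h (hcon j hj)
  have hT := irr {i} (by
    intro x hx j hj
    rw [Set.mem_singleton_iff] at hx
    rw [hx]
    exact h2 j (by simpa using hj))
  rcases hT with hT | hT
  · exact absurd hT (Set.singleton_ne_empty i)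
  · have hall : ∀ j : B, j = i := by
      intro j
      have hmem : j ∈ ({i} : Set B) := hT.symm ▸ Set.mem_univ j
      simpa using hmem
    have hP : ∀ w : W, w = 1 ∨ w = s i := by
      intro w
      refine cs.simple_induction_left (p := fun w => w = 1 ∨ w = cs.simple i) w (Or.inl rfl) ?_
      rintro w' j (rfl | rfl)
      · right
        rw [mul_one, hall j]
      · left
        rw [hall j, cs.simple_mul_simple_self]
    obtain ⟨x, hx⟩ := Infinite.exists_notMem_finset ({1, s i} : Finset W)
    rcases hP x with rfl | rfl
    · exact hx (by simp)
    · exact hx (by simp)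

theorem base_case (hra : ∀ i j : B, i ≠ j → M i j = 2 ∨ M i j = 0)
    (hnb : ∀ i : B, ∃ j, j ≠ i ∧ M i j = 0) :
    ∀ (n : ℕ) (v : W) (E : Finset B), E.card ≤ n →
      (∀ e ∈ E, ∀ e' ∈ E, e ≠ e' → M e e' = 2) →
      ∃ u, ℓ (v * u) = ℓ v + ℓ u ∧ ∀ e ∈ E, ¬cs.IsRightDescent (v * u) e := by
  classical
  intro n
  induction n with
  | zero =>
    intro v E hcard hcomm
    have hE : E = ∅ := Finset.card_eq_zero.mp (Nat.le_zero.mp hcard)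
    exact ⟨1, by simp, by rw [hE]; simp⟩
  | succ n ih =>
    intro v E hcard hcomm
    rcases Finset.eq_empty_or_nonempty E with rfl | ⟨p, hp⟩
    · exact ⟨1, by simp, by simp⟩
    · obtain ⟨q, hqp, hq0⟩ := hnb p
      set E₁ := E.filter (fun e => M e q = 2) with hE₁
      have hsub : E₁ ⊆ E.erase p := by
        intro e he
        rw [hE₁, Finset.mem_filter] at he
        rw [Finset.mem_erase]
        refine ⟨?_, he.1⟩
        intro hep
        rw [hep] at he
        rw [hq0] at he
        norm_num at he
      have hcard₁ : E₁.card ≤ n := by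
        have h1 := Finset.card_le_card hsub
        rw [Finset.card_erase_of_mem hp] at h1
        omega
      have hcomm₁ : ∀ e ∈ E₁, ∀ e' ∈ E₁, e ≠ e' → M e e' = 2 := by
        intro e he e' he' hne
        exact hcomm e (Finset.mem_filter.mp he).1 e' (Finset.mem_filter.mp he').1 hne
      obtain ⟨u₁, hu₁, hd₁⟩ := ih v E₁ hcard₁ hcomm₁
      obtain ⟨t, ht, htq, htransfer⟩ := extend_tail cs hra (fun h => hqp h.symm) hq0 (v * u₁)
      refine ⟨u₁ * t, ?_, ?_⟩
      · rw [← mul_assoc]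
        have h1 : ℓ (v * u₁ * t) = ℓ v + ℓ u₁ + ℓ t := by rw [ht, hu₁]
        have h2 := cs.length_mul_le v (u₁ * t)
        rw [← mul_assoc] at h2
        have h3 := cs.length_mul_le u₁ t
        omega
      · intro e he
        rw [← mul_assoc]
        by_cases heq0 : M e q = 0
        · have heqne : e ≠ q := by
            intro h
            rw [h, M.diagonal] at heq0
            norm_num at heq0
          exact fun hd => not_both_descents cs hra heqne heq0 (v * u₁ * t) hd htq
        · have heqne : e ≠ q := by
            intro h
            rw [h] at he
            have := hcomm p hp q he hqp.symm
            rw [this] at hq0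
            norm_num at hq0
          have heq2 : M e q = 2 := (hra e q heqne).resolve_right heq0
          have hepne : e ≠ p := by
            intro h
            rw [h, hq0] at heq2
            norm_num at heq2
          have hep2 : M e p = 2 := hcomm e he p hp hepne
          have heE₁ : e ∈ E₁ := Finset.mem_filter.mpr ⟨he, heq2⟩
          rw [htransfer e hep2 heq2 hepne heqne]
          exact hd₁ e heE₁

theorem main_ind (hra : ∀ i j : B, i ≠ j → M i j = 2 ∨ M i j = 0)
    (hnb : ∀ i : B, ∃ j, j ≠ i ∧ M i j = 0) :
    ∀ (n : ℕ) (w : W), ℓ w ≤ n → ∀ (v : W) (E : Finset B),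
      (∀ e ∈ E, ∀ e' ∈ E, e ≠ e' → M e e' = 2) →
      (∀ e ∈ E, ¬cs.IsRightDescent w e) →
      ∃ u, ℓ (v * u * w) = ℓ v + ℓ u + ℓ w ∧
        ∀ e ∈ E, ¬cs.IsRightDescent (v * u * w) e := by
  classical
  intro n
  induction n with
  | zero =>
    intro w hw v E hcomm hE
    have hw1 : w = 1 := cs.length_eq_zero_iff.mp (Nat.le_zero.mp hw)
    subst hw1
    obtain ⟨u, h1, h2⟩ := base_case cs hra hnb E.card v E le_rfl hcomm
    exact ⟨u, by simpa using h1, by simpa using h2⟩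
  | succ n ih =>
    intro w hw v E hcomm hE
    rcases eq_or_ne w 1 with rfl | hne
    · obtain ⟨u, h1, h2⟩ := base_case cs hra hnb E.card v E le_rfl hcomm
      exact ⟨u, by simpa using h1, by simpa using h2⟩
    · obtain ⟨d, hd⟩ := cs.exists_rightDescent_of_ne_one hne
      have hwlen : ℓ (w * s d) + 1 = ℓ w := cs.isRightDescent_iff.mp hd
      have hwrec : w = (w * s d) * s d := by rw [cs.simple_mul_simple_cancel_right]
      set w'' := w * s d with hw''def
      set E'' := insert d (E.filter (fun e => M e d = 2)) with hE''def
      have hcomm'' : ∀ e ∈ E'', ∀ e' ∈ E'', e ≠ e' → M e e' = 2 := by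
        intro e he e' he' hnee
        rw [hE''def, Finset.mem_insert] at he he'
        rcases he with rfl | he <;> rcases he' with rfl | he'
        · exact absurd rfl hnee
        · rw [M.symmetric]
          exact (Finset.mem_filter.mp he').2
        · exact (Finset.mem_filter.mp he).2
        · exact hcomm e (Finset.mem_filter.mp he).1 e' (Finset.mem_filter.mp he').1 hnee
      have hE'' : ∀ e ∈ E'', ¬cs.IsRightDescent w'' e := by
        intro e he
        rw [hE''def, Finset.mem_insert] at he
        rcases he with rfl | he
        · rw [cs.not_isRightDescent_iff, hw''def, cs.simple_mul_simple_cancel_right]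
          exact hwlen.symm
        · obtain ⟨heE, he2⟩ := Finset.mem_filter.mp he
          intro hdesc
          have hlow : ℓ (w'' * s e) + 1 = ℓ w'' := cs.isRightDescent_iff.mp hdesc
          apply hE e heE
          show ℓ (w * s e) < ℓ w
          have hcm : w * s e = (w'' * s e) * s d := by
            rw [hwrec, mul_assoc w'', ← simple_comm cs he2, ← mul_assoc]
          rw [hcm]
          have hbd := cs.length_mul_le (w'' * s e) (s d)
          rw [cs.length_simple] at hbd
          omega
      have hlen'' : ℓ w'' ≤ n := by omega
      obtain ⟨u, hadd, hdesc''⟩ := ih w'' hlen'' v E'' hcomm'' hE''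
      have hnd : ¬cs.IsRightDescent (v * u * w'') d :=
        hdesc'' d (by rw [hE''def]; exact Finset.mem_insert_self d _)
      have hvuw : v * u * w = (v * u * w'') * s d := by
        rw [hwrec, ← mul_assoc]
      have hstep : ℓ (v * u * w) = ℓ v + ℓ u + ℓ w := by
        rw [hvuw, cs.not_isRightDescent_iff.mp hnd, hadd]
        omega
      refine ⟨u, hstep, ?_⟩
      intro e he
      have hedne : e ≠ d := fun h => (hE e he) (h ▸ hd)
      by_cases hed : M e d = 0
      · have hDd : cs.IsRightDescent (v * u * w) d := by
          show ℓ (v * u * w * s d) < ℓ (v * u * w)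
          rw [hvuw, cs.simple_mul_simple_cancel_right, cs.not_isRightDescent_iff.mp hnd, hadd]
          omega
        exact fun hdd => not_both_descents cs hra hedne hed (v * u * w) hdd hDd
      · have hed2 : M e d = 2 := (hra e d hedne).resolve_right hed
        have heE'' : e ∈ E'' := by
          rw [hE''def]
          exact Finset.mem_insert_of_mem (Finset.mem_filter.mpr ⟨he, hed2⟩)
        have hne'' := hdesc'' e heE''
        have htr := descent_transfer cs hra hed2 hedne hnd
        rw [hvuw]
        exact fun h => hne'' (htr.mp h)

end RAJoin


/-- Let `(W,S)` be an irreducible infinite right-angled Coxeter system. For any `v, w ∈ W`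
there exists `u ∈ W` with `|v * u * w| = |v| + |u| + |w|`. -/
theorem irreducible_infinite_right_angled_exists_regular_join
    {B W : Type*} [Group W] (M : CoxeterMatrix B) (cs : CoxeterSystem M W)
    [Infinite W]
    (rightAngled : ∀ i j : B, i ≠ j → M i j = 2 ∨ M i j = 0)
    (irreducible : ∀ T : Set B, (∀ i ∈ T, ∀ j ∉ T, M i j = 2) → T = ∅ ∨ T = Set.univ)
    (v w : W) :
    ∃ u : W, cs.length (v * u * w) = cs.length v + cs.length u + cs.length w := by
  have hnb : ∀ i : B, ∃ j, j ≠ i ∧ M i j = 0 :=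
    RAJoin.exists_neighbor cs rightAngled irreducible
  obtain ⟨u, hu, -⟩ := RAJoin.main_ind cs rightAngled hnb (cs.length w) w le_rfl v ∅
    (by simp) (by simp)
  exact ⟨u, hu⟩
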